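/- Let R be an Ore domain with valuation υ : R → G ∪ {∞} for an ordered group (G,<), and let D = Q_cl(R) be its Ore division ring of fractions with the extended valuation. Then the localization of gr_υ(R) at its set H of nonzero homogeneous elements is isomorphic as a G-graded ring to gr_υ(D), via f + R_{>υ(f)} ↦ f + D_{>υ(f)} for f ∈ R. -/

import Mathlib

/-- An abstract characterization of the associated graded ring of a valuation filtration
(see Statement 3 for explanation of the fields). -/
structure IsAssociatedGradedRing (R : Type) [Ring R] (G : Type) [Group G] [LinearOrder G]
    (F : G → Set R) (A : Type) [Ring A] (φ : G → R → A) : Prop where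
  map_add : ∀ g : G, ∀ x y : R, x ∈ F g → y ∈ F g → φ g (x + y) = φ g x + φ g y
  zero_iff : ∀ g : G, ∀ x : R, x ∈ F g → (φ g x = 0 ↔ (x = 0 ∨ ∃ h > g, x ∈ F h))
  map_mul : ∀ g h : G, ∀ x y : R, x ∈ F g → y ∈ F h → φ g x * φ h y = φ (g * h) (x * y)
  map_one : φ 1 1 = 1
  gen : AddSubgroup.closure (⋃ g : G, φ g '' F g) = (⊤ : AddSubgroup A)
  indep : ∀ (s : Finset G) (c : G → R), (∀ g ∈ s, c g ∈ F g) →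
    (∑ g ∈ s, φ g (c g)) = 0 → ∀ g ∈ s, φ g (c g) = 0

private lemma graded_φ_zero {R : Type} [Ring R] {G : Type} [Group G] [LinearOrder G]
    {F : G → Set R} {A : Type} [Ring A] {φ : G → R → A}
    (hA : IsAssociatedGradedRing R G F A φ)
    (h0 : ∀ g, (0 : R) ∈ F g) (g : G) : φ g 0 = 0 := by
  have h := hA.map_add g 0 0 (h0 g) (h0 g)
  rw [add_zero] at h
  exact (add_left_cancel (a := φ g 0) (by rw [add_zero]; exact h)).symm

private lemma graded_φ_neg {R : Type} [Ring R] {G : Type} [Group G] [LinearOrder G]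
    {F : G → Set R} {A : Type} [Ring A] {φ : G → R → A}
    (hA : IsAssociatedGradedRing R G F A φ)
    (h0 : ∀ g, (0 : R) ∈ F g)
    (hneg : ∀ g : G, ∀ x : R, x ∈ F g → -x ∈ F g)
    (g : G) (x : R) (hx : x ∈ F g) : φ g (-x) = -φ g x := by
  have h := hA.map_add g x (-x) hx (hneg g x hx)
  rw [add_neg_cancel, graded_φ_zero hA h0] at h
  exact (neg_eq_of_add_eq_zero_right h.symm).symm

private lemma graded_repr {R : Type} [Ring R] {G : Type} [Group G] [LinearOrder G]
    {F : G → Set R} {A : Type} [Ring A] {φ : G → R → A}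
    (hA : IsAssociatedGradedRing R G F A φ)
    (h0 : ∀ g, (0 : R) ∈ F g)
    (hadd : ∀ g : G, ∀ x y : R, x ∈ F g → y ∈ F g → x + y ∈ F g)
    (hneg : ∀ g : G, ∀ x : R, x ∈ F g → -x ∈ F g)
    (a : A) :
    ∃ s : Finset G, ∃ c : G → R, (∀ g, c g ∈ F g) ∧ (∀ g ∉ s, c g = 0) ∧
      a = ∑ g ∈ s, φ g (c g) := by
  classical
  have φ0 : ∀ g, φ g 0 = 0 := graded_φ_zero hA h0
  have φneg : ∀ g x, x ∈ F g → φ g (-x) = -φ g x := graded_φ_neg hA h0 hneg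
  have ha : a ∈ AddSubgroup.closure (⋃ g : G, φ g '' F g) := by
    rw [hA.gen]; exact AddSubgroup.mem_top a
  induction ha using AddSubgroup.closure_induction with
  | mem y hy =>
    simp only [Set.mem_iUnion, Set.mem_image] at hy
    obtain ⟨g, x, hx, rfl⟩ := hy
    refine ⟨{g}, fun h => if h = g then x else 0, ?_, ?_, ?_⟩
    · intro h; by_cases hh : h = g
      · subst hh; simp only [if_pos rfl]; exact hx
      · simp only [if_neg hh]; exact h0 h
    · intro h hh
      dsimp only
      rw [if_neg (by simpa using hh)]
    · dsimp only
      rw [Finset.sum_singleton, if_pos rfl]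
  | zero => exact ⟨∅, fun _ => 0, fun g => h0 g, fun _ _ => rfl, by simp⟩
  | add x y hx hy ihx ihy =>
    obtain ⟨s, c, hc, hc0, rfl⟩ := ihx
    obtain ⟨t, d, hd, hd0, rfl⟩ := ihy
    refine ⟨s ∪ t, fun g => c g + d g, fun g => hadd g _ _ (hc g) (hd g), ?_, ?_⟩
    · intro g hg
      dsimp only
      rw [hc0 g (fun h => hg (Finset.mem_union_left t h)),
        hd0 g (fun h => hg (Finset.mem_union_right s h)), add_zero]
    · have e : ∀ g ∈ s ∪ t, φ g (c g + d g) = φ g (c g) + φ g (d g) :=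
        fun g _ => hA.map_add g _ _ (hc g) (hd g)
      have e1 : ∑ g ∈ s, φ g (c g) = ∑ g ∈ s ∪ t, φ g (c g) :=
        Finset.sum_subset Finset.subset_union_left (fun g _ hg => by rw [hc0 g hg, φ0])
      have e2 : ∑ g ∈ t, φ g (d g) = ∑ g ∈ s ∪ t, φ g (d g) :=
        Finset.sum_subset Finset.subset_union_right (fun g _ hg => by rw [hd0 g hg, φ0])
      dsimp only
      rw [Finset.sum_congr rfl e, Finset.sum_add_distrib, ← e1, ← e2]
  | neg x hx ihx =>
    obtain ⟨s, c, hc, hc0, rfl⟩ := ihx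
    refine ⟨s, fun g => -c g, fun g => hneg g _ (hc g),
      fun g hg => by dsimp only; rw [hc0 g hg, neg_zero], ?_⟩
    dsimp only
    rw [Finset.sum_congr rfl (fun g _ => φneg g _ (hc g)), ← Finset.sum_neg_distrib]

/-- Let `R` be an Ore domain with valuation `υ : R → G ∪ {∞}` for an
ordered group `(G,<)`, and let `D = Q_cl(R)` be its Ore division ring of fractions with
the extended valuation.  Then the localization of `gr_υ(R)` at its set `H` of nonzero
homogeneous elements is isomorphic as a `G`-graded ring to `gr_υ(D)`, via
`f + R_{>υ(f)} ↦ f + D_{>υ(f)}` for `f ∈ R`.  Concretely: with `(A, φ)` a realization of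
`gr_υ(R)` and `(B, ψ)` a realization of `gr_υ(D)`, there is an injective (degree
preserving) ring homomorphism `Λ : A → B` with `Λ (φ g x) = ψ g (ι x)`, which exhibits
`B` as the Ore localization of `A` at `H`: every element of `B` is a left fraction of
elements of `Λ(A)` with homogeneous denominator. -/
theorem localized_graded_of_ore_domain_iso_graded_of_fractions
    (R : Type) [Ring R] [IsDomain R]
    (hOre : ∀ a b : R, b ≠ 0 → ∃ c d : R, d ≠ 0 ∧ d * a = c * b)
    (G : Type) [Group G] [LinearOrder G]
    [CovariantClass G G (· * ·) (· < ·)]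
    [CovariantClass G G (Function.swap (· * ·)) (· < ·)]
    -- the valuation on `R` (restricted to nonzero elements)
    (υR : R → G)
    (haddR : ∀ x y : R, x ≠ 0 → y ≠ 0 → x + y ≠ 0 → min (υR x) (υR y) ≤ υR (x + y))
    (hmulR : ∀ x y : R, x ≠ 0 → y ≠ 0 → υR (x * y) = υR x * υR y)
    -- `D`, the Ore division ring of fractions of `R`
    (D : Type) [DivisionRing D] (ι : R →+* D)
    (hinj : Function.Injective ι)
    (hfrac : ∀ d : D, ∃ r s : R, s ≠ 0 ∧ ι s * d = ι r)
    -- the extended valuation on `D`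
    (υD : D → G)
    (haddD : ∀ x y : D, x ≠ 0 → y ≠ 0 → x + y ≠ 0 → min (υD x) (υD y) ≤ υD (x + y))
    (hmulD : ∀ x y : D, x ≠ 0 → y ≠ 0 → υD (x * y) = υD x * υD y)
    (hext : ∀ x : R, x ≠ 0 → υD (ι x) = υR x)
    -- realizations of the associated graded rings of `R` and of `D`
    (A : Type) [Ring A] (φ : G → R → A)
    (hA : IsAssociatedGradedRing R G (fun g => {x : R | x = 0 ∨ g ≤ υR x}) A φ)
    (B : Type) [Ring B] (ψ : G → D → B)
    (hB : IsAssociatedGradedRing D G (fun g => {x : D | x = 0 ∨ g ≤ υD x}) B ψ) :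
    ∃ Λ : A →+* B,
      Function.Injective Λ ∧
      -- `Λ` is the degree-preserving map `f + R_{>υ f} ↦ f + D_{>υ f}`
      (∀ (g : G) (x : R), (x = 0 ∨ g ≤ υR x) → Λ (φ g x) = ψ g (ι x)) ∧
      -- `B` is the Ore localization of `A` at the nonzero homogeneous elements
      (∀ b : B, ∃ h a : A, h ≠ 0 ∧
        (∃ g : G, ∃ x : R, (x = 0 ∨ g ≤ υR x) ∧ h = φ g x) ∧
        Λ h * b = Λ a) := by
  classical
  -- order facts
  have mul_le_left : ∀ a b c : G, a ≤ b → c * a ≤ c * b := fun a b c h =>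
    h.lt_or_eq.elim (fun h => (mul_lt_mul_right h c).le) (fun h => by rw [h])
  have mul_le_right : ∀ a b c : G, a ≤ b → a * c ≤ b * c := fun a b c h =>
    h.lt_or_eq.elim (fun h => (mul_lt_mul_left h c).le) (fun h => by rw [h])
  have sq_one : ∀ a : G, a * a = 1 → a = 1 := by
    intro a ha
    rcases lt_trichotomy a 1 with h | h | h
    · have h2 : a * a < 1 * a := mul_lt_mul_left h a
      rw [one_mul, ha] at h2
      exact absurd (h2.trans h) (lt_irrefl 1)
    · exact h
    · have h2 : 1 * a < a * a := mul_lt_mul_left h a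
      rw [one_mul, ha] at h2
      exact absurd (h.trans h2) (lt_irrefl 1)
  -- valuation facts
  have υR_one : υR 1 = 1 := by
    have h := hmulR 1 1 one_ne_zero one_ne_zero
    rw [one_mul] at h
    exact (mul_left_cancel (a := υR 1) (b := 1) (by rw [mul_one]; exact h)).symm
  have υR_neg : ∀ x : R, x ≠ 0 → υR (-x) = υR x := by
    have hm1 : υR (-1 : R) = 1 := by
      apply sq_one
      have h := hmulR (-1 : R) (-1) (neg_ne_zero.2 one_ne_zero) (neg_ne_zero.2 one_ne_zero)
      rw [neg_mul_neg, one_mul, υR_one] at h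
      exact h.symm
    intro x hx
    rw [← neg_one_mul, hmulR _ _ (neg_ne_zero.2 one_ne_zero) hx, hm1, one_mul]
  have υD_one : υD 1 = 1 := by
    have h := hmulD 1 1 one_ne_zero one_ne_zero
    rw [one_mul] at h
    exact (mul_left_cancel (a := υD 1) (b := 1) (by rw [mul_one]; exact h)).symm
  have υD_neg : ∀ x : D, x ≠ 0 → υD (-x) = υD x := by
    have hm1 : υD (-1 : D) = 1 := by
      apply sq_one
      have h := hmulD (-1 : D) (-1) (neg_ne_zero.2 one_ne_zero) (neg_ne_zero.2 one_ne_zero)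
      rw [neg_mul_neg, one_mul, υD_one] at h
      exact h.symm
    intro x hx
    rw [← neg_one_mul, hmulD _ _ (neg_ne_zero.2 one_ne_zero) hx, hm1, one_mul]
  -- membership facts for `FR`
  have memR0 : ∀ g : G, (0 : R) ∈ {x : R | x = 0 ∨ g ≤ υR x} := fun g => Or.inl rfl
  have memRadd : ∀ g : G, ∀ x y : R, x ∈ {x : R | x = 0 ∨ g ≤ υR x} →
      y ∈ {x : R | x = 0 ∨ g ≤ υR x} → x + y ∈ {x : R | x = 0 ∨ g ≤ υR x} := by
    intro g x y hx hy
    by_cases hx0 : x = 0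
    · subst hx0; rw [zero_add]; exact hy
    by_cases hy0 : y = 0
    · subst hy0; rw [add_zero]; exact hx
    by_cases hxy : x + y = 0
    · exact Or.inl hxy
    exact Or.inr (le_trans (le_min (hx.resolve_left hx0) (hy.resolve_left hy0))
      (haddR x y hx0 hy0 hxy))
  have memRneg : ∀ g : G, ∀ x : R, x ∈ {x : R | x = 0 ∨ g ≤ υR x} →
      -x ∈ {x : R | x = 0 ∨ g ≤ υR x} := by
    intro g x hx
    by_cases hx0 : x = 0
    · subst hx0; exact Or.inl neg_zero
    · exact Or.inr (by rw [υR_neg x hx0]; exact hx.resolve_left hx0)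
  have memRmul : ∀ g h : G, ∀ x y : R, x ∈ {x : R | x = 0 ∨ g ≤ υR x} →
      y ∈ {x : R | x = 0 ∨ h ≤ υR x} → x * y ∈ {z : R | z = 0 ∨ g * h ≤ υR z} := by
    intro g h x y hx hy
    by_cases hx0 : x = 0
    · subst hx0; exact Or.inl (zero_mul y)
    by_cases hy0 : y = 0
    · subst hy0; exact Or.inl (mul_zero x)
    refine Or.inr ?_
    rw [hmulR x y hx0 hy0]
    exact le_trans (mul_le_right g (υR x) h (hx.resolve_left hx0))
      (mul_le_left h (υR y) (υR x) (hy.resolve_left hy0))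
  -- membership facts for `FD`
  have memD0 : ∀ g : G, (0 : D) ∈ {x : D | x = 0 ∨ g ≤ υD x} := fun g => Or.inl rfl
  have memDadd : ∀ g : G, ∀ x y : D, x ∈ {x : D | x = 0 ∨ g ≤ υD x} →
      y ∈ {x : D | x = 0 ∨ g ≤ υD x} → x + y ∈ {x : D | x = 0 ∨ g ≤ υD x} := by
    intro g x y hx hy
    by_cases hx0 : x = 0
    · subst hx0; rw [zero_add]; exact hy
    by_cases hy0 : y = 0
    · subst hy0; rw [add_zero]; exact hx
    by_cases hxy : x + y = 0
    · exact Or.inl hxy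
    exact Or.inr (le_trans (le_min (hx.resolve_left hx0) (hy.resolve_left hy0))
      (haddD x y hx0 hy0 hxy))
  have memDneg : ∀ g : G, ∀ x : D, x ∈ {x : D | x = 0 ∨ g ≤ υD x} →
      -x ∈ {x : D | x = 0 ∨ g ≤ υD x} := by
    intro g x hx
    by_cases hx0 : x = 0
    · subst hx0; exact Or.inl neg_zero
    · exact Or.inr (by rw [υD_neg x hx0]; exact hx.resolve_left hx0)
  -- `ι` preserves membership
  have ι_ne : ∀ x : R, x ≠ 0 → ι x ≠ 0 := fun x hx h =>
    hx (hinj (by rw [h, map_zero]))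
  have memι : ∀ g : G, ∀ x : R, x ∈ {x : R | x = 0 ∨ g ≤ υR x} →
      ι x ∈ {x : D | x = 0 ∨ g ≤ υD x} := by
    intro g x hx
    by_cases hx0 : x = 0
    · subst hx0; exact Or.inl (map_zero ι)
    · exact Or.inr (by rw [hext x hx0]; exact hx.resolve_left hx0)
  -- graded piece facts
  have φ0 : ∀ g, φ g 0 = 0 := graded_φ_zero hA memR0
  have φneg : ∀ g x, x ∈ {x : R | x = 0 ∨ g ≤ υR x} → φ g (-x) = -φ g x :=
    graded_φ_neg hA memR0 memRneg
  have ψ0 : ∀ g, ψ g 0 = 0 := graded_φ_zero hB memD0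
  have ψneg : ∀ g x, x ∈ {x : D | x = 0 ∨ g ≤ υD x} → ψ g (-x) = -ψ g x :=
    graded_φ_neg hB memD0 memDneg
  -- vanishing transfer
  have key0 : ∀ g : G, ∀ x : R, x ∈ {x : R | x = 0 ∨ g ≤ υR x} →
      (φ g x = 0 ↔ ψ g (ι x) = 0) := by
    intro g x hx
    rw [hA.zero_iff g x hx, hB.zero_iff g (ι x) (memι g x hx)]
    constructor
    · rintro (rfl | ⟨h, hgh, hxh⟩)
      · exact Or.inl (map_zero ι)
      · exact Or.inr ⟨h, hgh, memι h x hxh⟩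
    · rintro (h0 | ⟨h, hgh, hxh⟩)
      · exact Or.inl (hinj (by rw [h0, map_zero]))
      · by_cases hx0 : x = 0
        · exact Or.inl hx0
        refine Or.inr ⟨h, hgh, Or.inr ?_⟩
        have hh := hxh.resolve_left (ι_ne x hx0)
        rwa [hext x hx0] at hh
  have repA := graded_repr hA memR0 memRadd memRneg
  have repB := graded_repr hB memD0 memDadd memDneg
  -- the key well-definedness lemma
  have sum_zero : ∀ (s : Finset G) (c : G → R), (∀ g, c g ∈ {x : R | x = 0 ∨ g ≤ υR x}) →
      (∑ g ∈ s, φ g (c g)) = 0 → (∑ g ∈ s, ψ g (ι (c g))) = 0 := by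
    intro s c hc h0
    have hz := hA.indep s c (fun g _ => hc g) h0
    exact Finset.sum_eq_zero fun g hg => (key0 g (c g) (hc g)).mp (hz g hg)
  have welldef : ∀ (s t : Finset G) (c d : G → R),
      (∀ g, c g ∈ {x : R | x = 0 ∨ g ≤ υR x}) → (∀ g ∉ s, c g = 0) →
      (∀ g, d g ∈ {x : R | x = 0 ∨ g ≤ υR x}) → (∀ g ∉ t, d g = 0) →
      (∑ g ∈ s, φ g (c g)) = (∑ g ∈ t, φ g (d g)) →
      (∑ g ∈ s, ψ g (ι (c g))) = (∑ g ∈ t, ψ g (ι (d g))) := by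
    intro s t c d hc hc0 hd hd0 he
    have e1 : ∑ g ∈ s, φ g (c g) = ∑ g ∈ s ∪ t, φ g (c g) :=
      Finset.sum_subset Finset.subset_union_left (fun g _ hg => by rw [hc0 g hg, φ0])
    have e2 : ∑ g ∈ t, φ g (d g) = ∑ g ∈ s ∪ t, φ g (d g) :=
      Finset.sum_subset Finset.subset_union_right (fun g _ hg => by rw [hd0 g hg, φ0])
    have e1' : ∑ g ∈ s, ψ g (ι (c g)) = ∑ g ∈ s ∪ t, ψ g (ι (c g)) :=
      Finset.sum_subset Finset.subset_union_left
        (fun g _ hg => by rw [hc0 g hg, map_zero, ψ0])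
    have e2' : ∑ g ∈ t, ψ g (ι (d g)) = ∑ g ∈ s ∪ t, ψ g (ι (d g)) :=
      Finset.sum_subset Finset.subset_union_right
        (fun g _ hg => by rw [hd0 g hg, map_zero, ψ0])
    have hcd : ∀ g : G, c g - d g ∈ {x : R | x = 0 ∨ g ≤ υR x} := fun g => by
      rw [sub_eq_add_neg]; exact memRadd g _ _ (hc g) (memRneg g _ (hd g))
    have hzero : (∑ g ∈ s ∪ t, φ g (c g - d g)) = 0 := by
      have e : ∀ g ∈ s ∪ t, φ g (c g - d g) = φ g (c g) - φ g (d g) := by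
        intro g _
        rw [sub_eq_add_neg, hA.map_add g _ _ (hc g) (memRneg g _ (hd g)), φneg g _ (hd g),
          ← sub_eq_add_neg]
      rw [Finset.sum_congr rfl e, Finset.sum_sub_distrib, ← e1, ← e2, he, sub_self]
    have h1 := sum_zero (s ∪ t) (fun g => c g - d g) hcd hzero
    have e' : ∀ g ∈ s ∪ t, ψ g (ι (c g - d g)) = ψ g (ι (c g)) - ψ g (ι (d g)) := by
      intro g _
      rw [map_sub, sub_eq_add_neg,
        hB.map_add g _ _ (memι g _ (hc g)) (memDneg g _ (memι g _ (hd g))),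
        ψneg g _ (memι g _ (hd g)), ← sub_eq_add_neg]
    rw [Finset.sum_congr rfl e', Finset.sum_sub_distrib, ← e1', ← e2'] at h1
    exact sub_eq_zero.mp h1
  -- define the map
  have main : ∀ a : A, ∃ b : B, ∀ (s : Finset G) (c : G → R),
      (∀ g, c g ∈ {x : R | x = 0 ∨ g ≤ υR x}) → (∀ g ∉ s, c g = 0) →
      a = ∑ g ∈ s, φ g (c g) → b = ∑ g ∈ s, ψ g (ι (c g)) := by
    intro a
    obtain ⟨s, c, hc, hc0, rfl⟩ := repA a
    exact ⟨∑ g ∈ s, ψ g (ι (c g)), fun t d hd hd0 he => welldef s t c d hc hc0 hd hd0 he⟩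
  choose Λ₀ hΛ₀ using main
  have Λ₀gen : ∀ g : G, ∀ x : R, x ∈ {x : R | x = 0 ∨ g ≤ υR x} →
      Λ₀ (φ g x) = ψ g (ι x) := by
    intro g x hx
    have h := hΛ₀ (φ g x) {g} (fun h => if h = g then x else 0)
      (by
        intro h; by_cases hh : h = g
        · subst hh; simp only [if_pos rfl]; exact hx
        · simp only [if_neg hh]; exact memR0 h)
      (by intro h hh; rw [if_neg (by simpa using hh)])
      (by rw [Finset.sum_singleton, if_pos rfl])
    rw [h, Finset.sum_singleton]
    rw [if_pos rfl]
  have Λ₀zero : Λ₀ 0 = 0 := by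
    have h := hΛ₀ 0 ∅ (fun _ => 0) (fun g => memR0 g) (fun _ _ => rfl) (by simp)
    simpa using h
  have Λ₀add : ∀ a b : A, Λ₀ (a + b) = Λ₀ a + Λ₀ b := by
    intro a b
    obtain ⟨s, c, hc, hc0, rfl⟩ := repA a
    obtain ⟨t, d, hd, hd0, rfl⟩ := repA b
    have ha := hΛ₀ _ s c hc hc0 rfl
    have hb := hΛ₀ _ t d hd hd0 rfl
    have hsum : (∑ g ∈ s, φ g (c g)) + (∑ g ∈ t, φ g (d g))
        = ∑ g ∈ s ∪ t, φ g (c g + d g) := by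
      have e : ∀ g ∈ s ∪ t, φ g (c g + d g) = φ g (c g) + φ g (d g) :=
        fun g _ => hA.map_add g _ _ (hc g) (hd g)
      have e1 : ∑ g ∈ s, φ g (c g) = ∑ g ∈ s ∪ t, φ g (c g) :=
        Finset.sum_subset Finset.subset_union_left (fun g _ hg => by rw [hc0 g hg, φ0])
      have e2 : ∑ g ∈ t, φ g (d g) = ∑ g ∈ s ∪ t, φ g (d g) :=
        Finset.sum_subset Finset.subset_union_right (fun g _ hg => by rw [hd0 g hg, φ0])
      rw [Finset.sum_congr rfl e, Finset.sum_add_distrib, ← e1, ← e2]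
    have hab := hΛ₀ _ (s ∪ t) (fun g => c g + d g)
      (fun g => memRadd g _ _ (hc g) (hd g))
      (fun g hg => by
        rw [hc0 g (fun h => hg (Finset.mem_union_left t h)),
          hd0 g (fun h => hg (Finset.mem_union_right s h)), add_zero]) hsum
    rw [ha, hb, hab]
    have e' : ∀ g ∈ s ∪ t, ψ g (ι (c g + d g)) = ψ g (ι (c g)) + ψ g (ι (d g)) := by
      intro g _
      rw [map_add, hB.map_add g _ _ (memι g _ (hc g)) (memι g _ (hd g))]
    have e1' : ∑ g ∈ s, ψ g (ι (c g)) = ∑ g ∈ s ∪ t, ψ g (ι (c g)) :=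
      Finset.sum_subset Finset.subset_union_left
        (fun g _ hg => by rw [hc0 g hg, map_zero, ψ0])
    have e2' : ∑ g ∈ t, ψ g (ι (d g)) = ∑ g ∈ s ∪ t, ψ g (ι (d g)) :=
      Finset.sum_subset Finset.subset_union_right
        (fun g _ hg => by rw [hd0 g hg, map_zero, ψ0])
    rw [Finset.sum_congr rfl e', Finset.sum_add_distrib, ← e1', ← e2']
  have Λ₀neg : ∀ a : A, Λ₀ (-a) = -Λ₀ a := by
    intro a
    have h := Λ₀add a (-a)
    rw [add_neg_cancel, Λ₀zero] at h
    exact (neg_eq_of_add_eq_zero_right h.symm).symm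
  have Λ₀one : Λ₀ 1 = 1 := by
    have h1 : (1 : A) = φ 1 1 := hA.map_one.symm
    rw [h1, Λ₀gen 1 1 (Or.inr υR_one.ge), map_one, hB.map_one]
  have hmemcl : ∀ a : A,
      a ∈ AddSubgroup.closure (⋃ g : G, φ g '' {x : R | x = 0 ∨ g ≤ υR x}) :=
    fun a => by rw [hA.gen]; exact AddSubgroup.mem_top a
  have gen_mul : ∀ (g : G) (x : R), x ∈ {x : R | x = 0 ∨ g ≤ υR x} →
      ∀ (h : G) (y : R), y ∈ {x : R | x = 0 ∨ h ≤ υR x} →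
      Λ₀ (φ g x * φ h y) = Λ₀ (φ g x) * Λ₀ (φ h y) := by
    intro g x hx h y hy
    rw [hA.map_mul g h x y hx hy, Λ₀gen _ _ (memRmul g h x y hx hy), map_mul,
      ← hB.map_mul g h (ι x) (ι y) (memι g x hx) (memι h y hy),
      Λ₀gen g x hx, Λ₀gen h y hy]
  have mul_gen_right : ∀ (g : G) (x : R), x ∈ {x : R | x = 0 ∨ g ≤ υR x} →
      ∀ b : A, Λ₀ (φ g x * b) = Λ₀ (φ g x) * Λ₀ b := by
    intro g x hx b
    induction hmemcl b using AddSubgroup.closure_induction with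
    | mem y hy =>
      simp only [Set.mem_iUnion, Set.mem_image] at hy
      obtain ⟨h, z, hz, rfl⟩ := hy
      exact gen_mul g x hx h z hz
    | zero => rw [mul_zero, Λ₀zero, mul_zero]
    | add y z _ _ ihy ihz => rw [mul_add, Λ₀add, ihy, ihz, Λ₀add, mul_add]
    | neg y _ ihy => rw [mul_neg, Λ₀neg, ihy, Λ₀neg, mul_neg]
  have Λ₀mul : ∀ a b : A, Λ₀ (a * b) = Λ₀ a * Λ₀ b := by
    intro a b
    induction hmemcl a using AddSubgroup.closure_induction with
    | mem y hy =>
      simp only [Set.mem_iUnion, Set.mem_image] at hy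
      obtain ⟨g, x, hx, rfl⟩ := hy
      exact mul_gen_right g x hx b
    | zero => rw [zero_mul, Λ₀zero, zero_mul]
    | add y z _ _ ihy ihz => rw [add_mul, Λ₀add, ihy, ihz, Λ₀add, add_mul]
    | neg y _ ihy => rw [neg_mul, Λ₀neg, ihy, Λ₀neg, neg_mul]
  refine ⟨{ toFun := Λ₀, map_one' := Λ₀one, map_mul' := Λ₀mul,
            map_zero' := Λ₀zero, map_add' := Λ₀add }, ?_, ?_, ?_⟩
  · refine (injective_iff_map_eq_zero _).mpr ?_
    intro a ha
    obtain ⟨s, c, hc, hc0, rfl⟩ := repA a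
    have hb : (∑ g ∈ s, ψ g (ι (c g))) = 0 := by
      rw [← hΛ₀ _ s c hc hc0 rfl]; exact ha
    have hz := hB.indep s (fun g => ι (c g)) (fun g _ => memι g (c g) (hc g)) hb
    exact Finset.sum_eq_zero fun g hg => (key0 g (c g) (hc g)).mpr (hz g hg)
  · intro g x hx
    exact Λ₀gen g x hx
  · intro b
    obtain ⟨t, dd, hdd, hdd0, rfl⟩ := repB b
    choose rn sd hsd hre using fun g : G => hfrac (dd g)
    have common : ∀ t' : Finset G, ∃ s : R, s ≠ 0 ∧ ∀ g ∈ t', ∃ v : R, s = v * sd g := by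
      intro t'
      induction t' using Finset.induction_on with
      | empty => exact ⟨1, one_ne_zero, fun g hg => absurd hg (Finset.notMem_empty g)⟩
      | @insert a t' ha ih =>
        obtain ⟨s', hs', hv⟩ := ih
        obtain ⟨c, d, hd, he⟩ := hOre s' (sd a) (hsd a)
        refine ⟨d * s', mul_ne_zero hd hs', fun g hg => ?_⟩
        rcases Finset.mem_insert.1 hg with rfl | hg
        · exact ⟨c, he⟩
        · obtain ⟨v, hv'⟩ := hv g hg
          exact ⟨d * v, by rw [hv', mul_assoc]⟩
    obtain ⟨s, hs, hv⟩ := common t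
    have hus : ∀ g : G, ∃ v : R, g ∈ t → s = v * sd g := by
      intro g
      by_cases hg : g ∈ t
      · obtain ⟨v, hv'⟩ := hv g hg; exact ⟨v, fun _ => hv'⟩
      · exact ⟨0, fun h => absurd h hg⟩
    choose u huu using hus
    have hsmem : s ∈ {x : R | x = 0 ∨ υR s ≤ υR x} := Or.inr le_rfl
    have hxι : ∀ g ∈ t, ι (u g * rn g) = ι s * dd g := by
      intro g hg
      rw [map_mul, ← hre g, ← mul_assoc, ← map_mul, ← huu g hg]
    have hxmem : ∀ g ∈ t, u g * rn g ∈ {x : R | x = 0 ∨ υR s * g ≤ υR x} := by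
      intro g hg
      by_cases hx0 : u g * rn g = 0
      · exact Or.inl hx0
      have hd0 : dd g ≠ 0 := by
        intro h
        exact hx0 (hinj (by rw [hxι g hg, h, mul_zero, map_zero]))
      refine Or.inr ?_
      have e : υR (u g * rn g) = υD (ι s * dd g) := by rw [← hext _ hx0, hxι g hg]
      rw [e, hmulD _ _ (ι_ne s hs) hd0, hext s hs]
      exact mul_le_left _ _ _ ((hdd g).resolve_left hd0)
    refine ⟨φ (υR s) s, ∑ g ∈ t, φ (υR s * g) (u g * rn g), ?_,
      ⟨υR s, s, Or.inr le_rfl, rfl⟩, ?_⟩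
    · intro h0
      rcases (hA.zero_iff (υR s) s hsmem).1 h0 with rfl | ⟨h, hh, hsh⟩
      · exact hs rfl
      · exact absurd (lt_of_lt_of_le hh (hsh.resolve_left hs)) (lt_irrefl (υR s))
    · have e1 : Λ₀ (φ (υR s) s) = ψ (υR s) (ι s) := Λ₀gen (υR s) s hsmem
      have e2 : Λ₀ (∑ g ∈ t, φ (υR s * g) (u g * rn g))
          = ∑ g ∈ t, ψ (υR s * g) (ι (u g * rn g)) := by
        rw [show (Λ₀ (∑ g ∈ t, φ (υR s * g) (u g * rn g)))
            = ({ toFun := Λ₀, map_one' := Λ₀one, map_mul' := Λ₀mul,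
                 map_zero' := Λ₀zero, map_add' := Λ₀add } : A →+* B)
              (∑ g ∈ t, φ (υR s * g) (u g * rn g)) from rfl, map_sum]
        exact Finset.sum_congr rfl fun g hg => Λ₀gen (υR s * g) _ (hxmem g hg)
      show Λ₀ (φ (υR s) s) * (∑ g ∈ t, ψ g (dd g))
          = Λ₀ (∑ g ∈ t, φ (υR s * g) (u g * rn g))
      rw [e1, e2, Finset.mul_sum]
      refine Finset.sum_congr rfl fun g hg => ?_
      rw [hB.map_mul (υR s) g (ι s) (dd g) (memι (υR s) s hsmem) (hdd g), hxι g hg]
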